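/- Let G be a group acting on a tree such that every element of G is hyperbolic (fixes no vertex) and all nontrivial elements share a common axis on which they act by translations, the translation length function being ‖g‖ = min over vertices p of d(p, g·p). If x ∈ G \ {1} has minimal translation length, then G = ⟨x⟩ and G ≅ ℤ. -/

import Mathlib

/-- Let `G` act on a tree `T` (by graph automorphisms) so that every nontrivial element
is hyperbolic (fixes no vertex), and suppose all elements act as translations on a common
axis (a bi-infinite geodesic `a : ℤ → V`), the translation length of `g` being
`‖g‖ = min over vertices p of d(p, g • p)`.  If `x ≠ 1` has minimal translation length,
then `G = ⟨x⟩` and `G ≅ ℤ`. -/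
theorem stmt_16 {G V : Type*} [Group G] [MulAction G V]
    (T : SimpleGraph V) (hconn : T.Connected) (hacyc : T.IsAcyclic)
    (hact : ∀ (g : G) (u v : V), T.Adj u v → T.Adj (g • u) (g • v))
    (hyp : ∀ g : G, g ≠ 1 → ∀ v : V, g • v ≠ v)
    (a : ℤ → V) (hainj : Function.Injective a) (haadj : ∀ n : ℤ, T.Adj (a n) (a (n + 1)))
    (trans : ∀ g : G, ∃ m : ℤ, (∀ n : ℤ, g • a n = a (n + m)) ∧
      m.natAbs = sInf {d : ℕ | ∃ p : V, T.dist p (g • p) = d})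
    (x : G) (hx : x ≠ 1)
    (hmin : ∀ g : G, g ≠ 1 →
      sInf {d : ℕ | ∃ p : V, T.dist p (x • p) = d} ≤
        sInf {d : ℕ | ∃ p : V, T.dist p (g • p) = d}) :
    (∀ g : G, g ∈ Subgroup.zpowers x) ∧ Nonempty (G ≃* Multiplicative ℤ) := by
  classical
  -- the translation amount of each g
  set m : G → ℤ := fun g => (trans g).choose with hm_def
  have hm : ∀ (g : G) (n : ℤ), g • a n = a (n + m g) := fun g => (trans g).choose_spec.1
  have habs : ∀ g : G, (m g).natAbs = sInf {d : ℕ | ∃ p : V, T.dist p (g • p) = d} :=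
    fun g => (trans g).choose_spec.2
  -- m is additive
  have hmul : ∀ g h : G, m (g * h) = m h + m g := by
    intro g h
    have e1 : (g * h) • a 0 = a (0 + m (g * h)) := hm (g * h) 0
    have e2 : (g * h) • a 0 = a (0 + m h + m g) := by
      rw [mul_smul, hm h 0, hm g (0 + m h)]
    have := hainj (e1.symm.trans e2)
    omega
  -- kernel is trivial
  have hker : ∀ g : G, m g = 0 → g = 1 := by
    intro g hg
    by_contra hne
    have := hyp g hne (a 0)
    rw [hm g 0, hg] at this
    exact this rfl
  have hxne : m x ≠ 0 := fun h => hx (hker x h)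
  have hone : m (1 : G) = 0 := by
    have := hmul 1 1; simpa using this
  -- m (x ^ k) = k * m x
  have hpow : ∀ k : ℤ, m (x ^ k) = k * m x := by
    intro k
    induction k using Int.induction_on with
    | zero => simpa using hone
    | succ n ih =>
        have h0 := hmul (x ^ (n : ℤ)) x
        rw [← zpow_add_one] at h0
        rw [h0, ih]; ring
    | pred n ih =>
        have h0 := hmul (x ^ (-(n : ℤ) - 1)) x
        have e : x ^ (-(n : ℤ) - 1) * x = x ^ (-(n : ℤ)) := by
          rw [← zpow_add_one]; ring_nf
        rw [e, ih] at h0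
        linarith
  -- every g is a power of x
  have hzp : ∀ g : G, g ∈ Subgroup.zpowers x := by
    intro g
    set q : ℤ := m g / m x with hq
    set r : ℤ := m g % m x with hr
    have hdecomp : m g = m x * q + r := (Int.mul_ediv_add_emod (m g) (m x)).symm
    have hmel : m (g * x ^ (-q)) = r := by
      rw [hmul g (x ^ (-q)), hpow]
      linear_combination hdecomp
    have hr0 : r = 0 := by
      by_contra hr0
      have hne : g * x ^ (-q) ≠ 1 := by
        intro h
        rw [h, hone] at hmel
        exact hr0 hmel.symm
      have hle := hmin (g * x ^ (-q)) hne
      rw [← habs, ← habs, hmel] at hle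
      have h1 : 0 ≤ r := Int.emod_nonneg (m g) hxne
      have h2 : r < |m x| := by have := Int.emod_lt (m g) hxne; rw [Int.abs_eq_natAbs]; exact this
      rw [Int.abs_eq_natAbs] at h2
      omega
    have h1 : g * x ^ (-q) = 1 := hker _ (by rw [hmel, hr0])
    have hg : g = x ^ q := by
      have := mul_eq_one_iff_eq_inv.mp h1
      rw [this, ← zpow_neg]; ring_nf
    exact ⟨q, hg.symm⟩
  refine ⟨hzp, ?_⟩
  -- the isomorphism
  have hbij : Function.Bijective (zpowersHom G x) := by
    constructor
    · intro k j hkj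
      have : m (x ^ (Multiplicative.toAdd k)) = m (x ^ (Multiplicative.toAdd j)) := by
        simp only [zpowersHom_apply] at hkj
        rw [hkj]
      rw [hpow, hpow] at this
      have : Multiplicative.toAdd k = Multiplicative.toAdd j := by
        exact mul_right_cancel₀ hxne this
      exact Multiplicative.toAdd.injective this
    · intro g
      obtain ⟨k, hk⟩ := hzp g
      exact ⟨Multiplicative.ofAdd k, by simpa using hk⟩
  exact ⟨(MulEquiv.ofBijective (zpowersHom G x) hbij).symm⟩
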